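/- Let μ be a probability measure on the unit circle with orthonormal Szegő polynomials (φ_n), and let {p_n} be a generating sequence with s_n = p_n − p_{n−1}. Define ψ_n(z) = z^{−p_n}·φ_n(z) if s_n = 0 and ψ_n(z) = z^{−p_n}·φ*_n(z) if s_n = 1. Then (ψ_n) is orthonormal: ⟨ψ_n, ψ_m⟩ = δ_{nm} with respect to the inner product induced by μ. -/

import Mathlib

open Polynomial MeasureTheory

/-- The dual (reversed) polynomial of `p` regarded as a polynomial of degree `n`:
`p*(z) = Σ_{k=0}^{n} conj(c_{n-k}) z^k` where `p = Σ c_k z^k`. -/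
noncomputable def dualPoly (n : ℕ) (p : Polynomial ℂ) : Polynomial ℂ :=
  ∑ k ∈ Finset.range (n + 1), Polynomial.C (starRingEnd ℂ (p.coeff (n - k))) * Polynomial.X ^ k

lemma expI_ne (θ : ℝ) : Complex.exp (θ * Complex.I) ≠ 0 := Complex.exp_ne_zero _

lemma expI_conj (θ : ℝ) :
    starRingEnd ℂ (Complex.exp (θ * Complex.I)) = (Complex.exp (θ * Complex.I))⁻¹ := by
  rw [← Complex.exp_conj, ← Complex.exp_neg]
  congr 1
  simp [Complex.ext_iff]

lemma expI_mem_sphere (θ : ℝ) : Complex.exp (θ * Complex.I) ∈ Metric.sphere (0:ℂ) 1 := by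
  simp [Complex.norm_exp]

lemma integrable_circ (μ : Measure ℝ) [IsFiniteMeasure μ] (F : ℂ → ℂ)
    (hF : ContinuousOn F (Metric.sphere (0:ℂ) 1)) :
    Integrable (fun θ : ℝ => F (Complex.exp (θ * Complex.I))) μ := by
  have hc : Continuous fun θ : ℝ => F (Complex.exp (θ * Complex.I)) :=
    hF.comp_continuous (by continuity) expI_mem_sphere
  obtain ⟨C, hC⟩ := (isCompact_sphere (0:ℂ) 1).exists_bound_of_continuousOn hF
  exact ⟨hc.aestronglyMeasurable,
    HasFiniteIntegral.of_bounded (C := C)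
      (Filter.Eventually.of_forall fun θ => hC _ (expI_mem_sphere θ))⟩

lemma contOn_zpow_sphere (j : ℤ) : ContinuousOn (fun w : ℂ => w ^ j) (Metric.sphere (0:ℂ) 1) := by
  intro w hw
  have hw0 : w ≠ 0 := by
    simp only [Metric.mem_sphere, dist_zero_right] at hw
    intro h; rw [h] at hw; simp at hw
  exact (continuousAt_zpow₀ w j (Or.inl hw0)).continuousWithinAt

lemma contOn_conj_eval (q : Polynomial ℂ) (s : Set ℂ) :
    ContinuousOn (fun w : ℂ => starRingEnd ℂ (q.eval w)) s :=
  (continuous_star.comp q.continuous).continuousOn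

lemma dualPoly_natDegree_le (n : ℕ) (q : Polynomial ℂ) : (dualPoly n q).natDegree ≤ n := by
  refine natDegree_sum_le_of_forall_le _ _ fun k hk => ?_
  refine le_trans (natDegree_C_mul_le _ _) ?_
  simp only [natDegree_X_pow]
  exact Nat.lt_succ_iff.mp (Finset.mem_range.mp hk)

lemma dualPoly_eval {q : Polynomial ℂ} {N : ℕ} (hq : q.natDegree ≤ N) {w : ℂ}
    (hw : w ≠ 0) (hwc : starRingEnd ℂ w = w⁻¹) :
    (dualPoly N q).eval w = w ^ N * starRingEnd ℂ (q.eval w) := by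
  have hrhs : q.eval w = ∑ j ∈ Finset.range (N + 1), q.coeff j * w ^ j :=
    eval_eq_sum_range' (Nat.lt_succ_of_le hq) w
  rw [hrhs]
  rw [map_sum, Finset.mul_sum]
  have : ∀ j ∈ Finset.range (N + 1),
      w ^ N * starRingEnd ℂ (q.coeff j * w ^ j)
        = starRingEnd ℂ (q.coeff j) * w ^ (N - j) := by
    intro j hj
    have hjN : j ≤ N := Nat.lt_succ_iff.mp (Finset.mem_range.mp hj)
    rw [map_mul, map_pow, hwc]
    rw [pow_sub₀ w hw hjN]
    field_simp
    rw [mul_assoc, ← mul_pow]; simp [hw]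
  rw [Finset.sum_congr rfl this]
  rw [dualPoly, eval_finset_sum]
  rw [← Finset.sum_range_reflect (fun j => starRingEnd ℂ (q.coeff j) * w ^ (N - j)) (N + 1)]
  refine Finset.sum_congr rfl fun k hk => ?_
  have hkN : k ≤ N := Nat.lt_succ_iff.mp (Finset.mem_range.mp hk)
  simp only [eval_mul, eval_C, eval_pow, eval_X, Nat.succ_sub_one]
  congr 2
  omega

lemma conj_mul_self_circle {w : ℂ} (hw : w ≠ 0) (hwc : starRingEnd ℂ w = w⁻¹)
    (j : ℤ) (f : ℂ) :
    starRingEnd ℂ (w ^ j * f) * (w ^ j * f) = starRingEnd ℂ f * f := by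
  rw [map_mul, map_zpow₀, hwc, inv_zpow, ← zpow_neg]
  have h : w ^ (-j) * starRingEnd ℂ f * (w ^ j * f)
      = (w ^ (-j) * w ^ j) * (starRingEnd ℂ f * f) := by ring
  rw [h, ← zpow_add₀ hw]
  simp

/-- let `μ` be a probability measure on the unit circle with orthonormal
Szegő polynomials `φ_n` (degree `n`, positive leading coefficient), `p` a generating
sequence with steps `s_n = p_n - p_{n-1}`, and define
`ψ_n(z) = z^{-p_n}·φ_n(z)` if `s_n = 0`, `ψ_n(z) = z^{-p_n}·φ*_n(z)` if `s_n = 1`.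
Then `(ψ_n)` is orthonormal with respect to the inner product induced by `μ`. -/
theorem stmt7 (μ : Measure ℝ) [IsProbabilityMeasure μ]
    (φ : ℕ → Polynomial ℂ)
    (hdeg : ∀ n, (φ n).natDegree = n)
    (hlc : ∀ n, ∃ r : ℝ, 0 < r ∧ (φ n).leadingCoeff = (r : ℂ))
    (horth : ∀ n m : ℕ,
      ∫ θ, starRingEnd ℂ ((φ n).eval (Complex.exp (θ * Complex.I))) *
        (φ m).eval (Complex.exp (θ * Complex.I)) ∂μ = if n = m then 1 else 0)
    (p : ℕ → ℕ) (hp0 : p 0 = 0) (hple : ∀ n, p n ≤ n)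
    (hstep : ∀ n, p (n + 1) = p n ∨ p (n + 1) = p n + 1)
    (ψ : ℕ → ℂ → ℂ)
    (hψ0 : ∀ n z, p n = p (n - 1) →
      ψ n z = z ^ (-(p n : ℤ)) * (φ n).eval z)
    (hψ1 : ∀ n z, n ≠ 0 → p n = p (n - 1) + 1 →
      ψ n z = z ^ (-(p n : ℤ)) * (dualPoly n (φ n)).eval z) :
    ∀ n m : ℕ,
      ∫ θ, starRingEnd ℂ (ψ n (Complex.exp (θ * Complex.I))) *
        ψ m (Complex.exp (θ * Complex.I)) ∂μ = if n = m then 1 else 0 := by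
  -- monotonicity of `p` and of `n - p n`
  have hmono : ∀ a b : ℕ, a ≤ b → p a ≤ p b ∧ (a:ℤ) - p a ≤ (b:ℤ) - p b := by
    intro a b hab
    induction b, hab using Nat.le_induction with
    | base => exact ⟨le_rfl, le_rfl⟩
    | succ b hab ih =>
      obtain ⟨ih1, ih2⟩ := ih
      rcases hstep b with h | h <;> constructor <;> omega
  have htype : ∀ n : ℕ, p n = p (n-1) ∨ (n ≠ 0 ∧ p n = p (n-1) + 1) := by
    intro n
    cases n with
    | zero => exact Or.inl rfl
    | succ k =>
      rcases hstep k with h | h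
      · exact Or.inl (by simpa using h)
      · exact Or.inr ⟨Nat.succ_ne_zero k, by simpa using h⟩
  -- <φ_n, z^k> = 0 for k < n
  have lemA : ∀ k n : ℕ, k < n →
      ∫ θ, starRingEnd ℂ ((φ n).eval (Complex.exp (θ * Complex.I))) *
        (Complex.exp (θ * Complex.I)) ^ k ∂μ = 0 := by
    intro k
    induction k using Nat.strong_induction_on with
    | _ k ih =>
      intro n hkn
      have h0 := horth n k
      rw [if_neg (by omega)] at h0
      have hev : ∀ θ : ℝ, starRingEnd ℂ ((φ n).eval (Complex.exp (θ * Complex.I))) *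
          (φ k).eval (Complex.exp (θ * Complex.I))
          = ∑ j ∈ Finset.range (k+1), (φ k).coeff j *
            (starRingEnd ℂ ((φ n).eval (Complex.exp (θ * Complex.I))) *
              (Complex.exp (θ * Complex.I)) ^ j) := by
        intro θ
        rw [eval_eq_sum_range' (p := φ k) (n := k+1) (by rw [hdeg k]; omega), Finset.mul_sum]
        exact Finset.sum_congr rfl fun j _ => by ring
      simp only [hev] at h0
      rw [integral_finset_sum _ (fun j _ => integrable_circ μ
        (fun w => (φ k).coeff j * (starRingEnd ℂ ((φ n).eval w) * w ^ j))
        (continuousOn_const.mul ((contOn_conj_eval _ _).mul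
          ((continuous_pow j).continuousOn)))) ] at h0
      simp only [integral_const_mul] at h0
      rw [Finset.sum_eq_single_of_mem k (Finset.self_mem_range_succ k)
        (fun j hj hne => by
          have hj' := Finset.mem_range.mp hj
          rw [ih j (by omega) n (by omega), mul_zero])] at h0
      have hck : (φ k).coeff k ≠ 0 := by
        obtain ⟨r, hr, hlcr⟩ := hlc k
        have : (φ k).coeff k = (φ k).leadingCoeff := by
          rw [Polynomial.leadingCoeff, hdeg]
        rw [this, hlcr]
        exact_mod_cast hr.ne'
      exact (mul_eq_zero.mp h0).resolve_left hck
  -- <z^k, φ_n> = 0 for k < n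
  have lemA' : ∀ k n : ℕ, k < n →
      ∫ θ, starRingEnd ℂ ((Complex.exp (θ * Complex.I)) ^ k) *
        (φ n).eval (Complex.exp (θ * Complex.I)) ∂μ = 0 := by
    intro k n hkn
    have hpt : ∀ θ : ℝ, starRingEnd ℂ ((Complex.exp (θ * Complex.I)) ^ k) *
        (φ n).eval (Complex.exp (θ * Complex.I))
        = starRingEnd ℂ (starRingEnd ℂ ((φ n).eval (Complex.exp (θ * Complex.I))) *
            (Complex.exp (θ * Complex.I)) ^ k) := by
      intro θ
      rw [map_mul, starRingEnd_self_apply, mul_comm]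
    simp only [hpt]
    rw [integral_conj, lemA k n hkn, map_zero]
  -- type-0 orthogonality to monomials
  have lemC0 : ∀ (n : ℕ) (j : ℤ), -(p n : ℤ) ≤ j → j ≤ (n:ℤ) - 1 - p n →
      ∫ θ, (starRingEnd ℂ ((φ n).eval (Complex.exp (θ * Complex.I))) *
          (Complex.exp (θ * Complex.I)) ^ ((p n : ℤ))) *
        (Complex.exp (θ * Complex.I)) ^ j ∂μ = 0 := by
    intro n j hj1 hj2
    set K : ℕ := ((p n : ℤ) + j).toNat with hK
    have hKz : (K : ℤ) = (p n : ℤ) + j := Int.toNat_of_nonneg (by omega)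
    have hKn : K < n := by omega
    have hpt : ∀ θ : ℝ, (starRingEnd ℂ ((φ n).eval (Complex.exp (θ * Complex.I))) *
        (Complex.exp (θ * Complex.I)) ^ ((p n : ℤ))) * (Complex.exp (θ * Complex.I)) ^ j
        = starRingEnd ℂ ((φ n).eval (Complex.exp (θ * Complex.I))) *
          (Complex.exp (θ * Complex.I)) ^ K := by
      intro θ
      rw [mul_assoc, ← zpow_add₀ (expI_ne θ), ← hKz, zpow_natCast]
    simp only [hpt]
    exact lemA K n hKn
  -- type-1 orthogonality to monomials
  have lemC1 : ∀ (n : ℕ) (j : ℤ), 1 - (p n : ℤ) ≤ j → j ≤ (n:ℤ) - p n →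
      ∫ θ, ((φ n).eval (Complex.exp (θ * Complex.I)) *
          (Complex.exp (θ * Complex.I)) ^ ((p n : ℤ) - n)) *
        (Complex.exp (θ * Complex.I)) ^ j ∂μ = 0 := by
    intro n j hj1 hj2
    set K : ℕ := ((n : ℤ) - p n - j).toNat with hK
    have hKz : (K : ℤ) = (n : ℤ) - p n - j := Int.toNat_of_nonneg (by omega)
    have hKn : K < n := by omega
    have hpt : ∀ θ : ℝ, ((φ n).eval (Complex.exp (θ * Complex.I)) *
        (Complex.exp (θ * Complex.I)) ^ ((p n : ℤ) - n)) * (Complex.exp (θ * Complex.I)) ^ j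
        = starRingEnd ℂ ((Complex.exp (θ * Complex.I)) ^ K) *
          (φ n).eval (Complex.exp (θ * Complex.I)) := by
      intro θ
      rw [mul_assoc, ← zpow_add₀ (expI_ne θ), mul_comm]
      congr 1
      rw [map_pow, expI_conj, inv_pow, ← zpow_natCast, ← zpow_neg]
      congr 1
      omega
    simp only [hpt]
    exact lemA' K n hKn
  -- the off-diagonal case m < n
  have keycase : ∀ n m : ℕ, m < n →
      ∫ θ, starRingEnd ℂ (ψ n (Complex.exp (θ * Complex.I))) *
        ψ m (Complex.exp (θ * Complex.I)) ∂μ = 0 := by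
    intro n m hmn
    obtain ⟨Fn, hFn, hFncont, hFzero⟩ :
        ∃ Fn : ℂ → ℂ, (∀ θ : ℝ, starRingEnd ℂ (ψ n (Complex.exp (θ * Complex.I)))
            = Fn (Complex.exp (θ * Complex.I))) ∧
          ContinuousOn Fn (Metric.sphere (0:ℂ) 1) ∧
          (∀ j : ℤ, -(p m : ℤ) ≤ j → j ≤ (m:ℤ) - p m →
            ∫ θ, Fn (Complex.exp (θ * Complex.I)) *
              (Complex.exp (θ * Complex.I)) ^ j ∂μ = 0) := by
      have hmm : p m ≤ p (n-1) ∧ (m:ℤ) - p m ≤ ((n-1 : ℕ):ℤ) - p (n-1) :=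
        hmono m (n-1) (by omega)
      have hn1 : ((n-1 : ℕ):ℤ) = (n:ℤ) - 1 := by omega
      rcases htype n with h | ⟨hn0, h⟩
      · refine ⟨fun w => starRingEnd ℂ ((φ n).eval w) * w ^ ((p n : ℤ)), ?_, ?_, ?_⟩
        · intro θ
          show starRingEnd ℂ (ψ n (Complex.exp (θ * Complex.I)))
            = starRingEnd ℂ ((φ n).eval (Complex.exp (θ * Complex.I))) *
              (Complex.exp (θ * Complex.I)) ^ ((p n : ℤ))
          rw [hψ0 n _ h, map_mul, map_zpow₀, expI_conj, inv_zpow', neg_neg, mul_comm]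
        · exact (contOn_conj_eval _ _).mul (contOn_zpow_sphere _)
        · intro j hj1 hj2
          exact lemC0 n j (by omega) (by omega)
      · refine ⟨fun w => (φ n).eval w * w ^ ((p n : ℤ) - n), ?_, ?_, ?_⟩
        · intro θ
          show starRingEnd ℂ (ψ n (Complex.exp (θ * Complex.I)))
            = (φ n).eval (Complex.exp (θ * Complex.I)) *
              (Complex.exp (θ * Complex.I)) ^ ((p n : ℤ) - n)
          rw [hψ1 n _ hn0 h, dualPoly_eval (hdeg n).le (expI_ne θ) (expI_conj θ),
            map_mul, map_mul, map_pow, map_zpow₀, expI_conj, starRingEnd_self_apply,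
            inv_zpow', neg_neg, inv_pow, ← zpow_natCast (Complex.exp (θ * Complex.I)) n,
            ← zpow_neg, ← mul_assoc, ← zpow_add₀ (expI_ne θ), ← sub_eq_add_neg,
            mul_comm]
        · exact ((φ n).continuous.continuousOn).mul (contOn_zpow_sphere _)
        · intro j hj1 hj2
          exact lemC1 n j (by omega) (by omega)
    obtain ⟨Q, hQdeg, hQψ⟩ : ∃ Q : Polynomial ℂ, Q.natDegree ≤ m ∧
        ∀ θ : ℝ, ψ m (Complex.exp (θ * Complex.I))
          = (Complex.exp (θ * Complex.I)) ^ (-(p m : ℤ)) *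
            Q.eval (Complex.exp (θ * Complex.I)) := by
      rcases htype m with h | ⟨hm0, h⟩
      · exact ⟨φ m, (hdeg m).le, fun θ => hψ0 m _ h⟩
      · exact ⟨dualPoly m (φ m), dualPoly_natDegree_le _ _, fun θ => hψ1 m _ hm0 h⟩
    have hpt : ∀ θ : ℝ, starRingEnd ℂ (ψ n (Complex.exp (θ * Complex.I))) *
        ψ m (Complex.exp (θ * Complex.I))
        = ∑ k ∈ Finset.range (m+1), Q.coeff k *
          (Fn (Complex.exp (θ * Complex.I)) *
            (Complex.exp (θ * Complex.I)) ^ ((k:ℤ) - p m)) := by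
      intro θ
      rw [hFn θ, hQψ θ, eval_eq_sum_range' (Nat.lt_succ_of_le hQdeg), Finset.mul_sum,
        Finset.mul_sum]
      refine Finset.sum_congr rfl fun k hk => ?_
      rw [show ((k:ℤ) - p m) = (-(p m : ℤ)) + k by ring, zpow_add₀ (expI_ne θ),
        zpow_natCast]
      ring
    simp only [hpt]
    rw [integral_finset_sum _ (fun k _ => integrable_circ μ
      (fun w => Q.coeff k * (Fn w * w ^ ((k:ℤ) - p m)))
      (continuousOn_const.mul (hFncont.mul (contOn_zpow_sphere _))))]
    simp only [integral_const_mul]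
    refine Finset.sum_eq_zero fun k hk => ?_
    have hkm : k ≤ m := by
      have := Finset.mem_range.mp hk; omega
    rw [hFzero ((k:ℤ) - p m) (by omega) (by omega), mul_zero]
  -- the diagonal case
  have diag : ∀ n : ℕ,
      ∫ θ, starRingEnd ℂ (ψ n (Complex.exp (θ * Complex.I))) *
        ψ n (Complex.exp (θ * Complex.I)) ∂μ = 1 := by
    intro n
    have h1 := horth n n
    rw [if_pos rfl] at h1
    rcases htype n with h | ⟨hn0, h⟩
    · have hpt : ∀ θ : ℝ, starRingEnd ℂ (ψ n (Complex.exp (θ * Complex.I))) *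
          ψ n (Complex.exp (θ * Complex.I))
          = starRingEnd ℂ ((φ n).eval (Complex.exp (θ * Complex.I))) *
            (φ n).eval (Complex.exp (θ * Complex.I)) := by
        intro θ
        rw [hψ0 n _ h]
        exact conj_mul_self_circle (expI_ne θ) (expI_conj θ) _ _
      simp only [hpt]
      exact h1
    · have hpt : ∀ θ : ℝ, starRingEnd ℂ (ψ n (Complex.exp (θ * Complex.I))) *
          ψ n (Complex.exp (θ * Complex.I))
          = starRingEnd ℂ ((φ n).eval (Complex.exp (θ * Complex.I))) *
            (φ n).eval (Complex.exp (θ * Complex.I)) := by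
        intro θ
        rw [hψ1 n _ hn0 h, dualPoly_eval (hdeg n).le (expI_ne θ) (expI_conj θ)]
        have hx : (Complex.exp (θ * Complex.I)) ^ (-(p n : ℤ)) *
            ((Complex.exp (θ * Complex.I)) ^ n *
              starRingEnd ℂ ((φ n).eval (Complex.exp (θ * Complex.I))))
            = (Complex.exp (θ * Complex.I)) ^ ((n:ℤ) - p n) *
              starRingEnd ℂ ((φ n).eval (Complex.exp (θ * Complex.I))) := by
          rw [← mul_assoc, ← zpow_natCast (Complex.exp (θ * Complex.I)) n,
            ← zpow_add₀ (expI_ne θ)]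
          congr 2
          omega
        rw [hx, conj_mul_self_circle (expI_ne θ) (expI_conj θ), starRingEnd_self_apply,
          mul_comm]
      simp only [hpt]
      exact h1
  intro n m
  rcases lt_trichotomy n m with h | h | h
  · rw [if_neg (by omega)]
    have hpt : ∀ θ : ℝ, starRingEnd ℂ (ψ n (Complex.exp (θ * Complex.I))) *
        ψ m (Complex.exp (θ * Complex.I))
        = starRingEnd ℂ (starRingEnd ℂ (ψ m (Complex.exp (θ * Complex.I))) *
            ψ n (Complex.exp (θ * Complex.I))) := by
      intro θ
      rw [map_mul, starRingEnd_self_apply, mul_comm]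
    simp only [hpt]
    rw [integral_conj, keycase m n h, map_zero]
  · subst h
    rw [if_pos rfl]
    exact diag n
  · rw [if_neg (by omega)]
    exact keycase n m h
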